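/- For the Cauchy densities p_a(y) = a/(π(a² + y²)) with a, b > 0, one has ∫_ℝ p_b(y)²/p_a(y) dy = (a² + b²)/(2ab). -/

import Mathlib

open Real MeasureTheory

lemma integral_inv_sq_add_sq' (b : ℝ) (hb : 0 < b) :
    ∫ y : ℝ, (b^2 + y^2)⁻¹ = π / b := by
  have h := MeasureTheory.Measure.integral_comp_mul_left (fun x : ℝ => (b^2 * (1 + x^2))⁻¹) b⁻¹
  have hb' : b ≠ 0 := hb.ne'
  simp only [abs_inv, inv_inv, abs_of_pos hb] at h
  have e1 : ∀ x : ℝ, (b^2 * (1 + (b⁻¹ * x)^2))⁻¹ = (b^2 + x^2)⁻¹ := by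
    intro x; field_simp
  simp only [e1] at h
  rw [h]
  have e2 : ∀ x : ℝ, (b^2 * (1 + x^2))⁻¹ = (b^2)⁻¹ * (1 + x^2)⁻¹ := by
    intro x; rw [mul_inv]
  simp only [e2]
  rw [integral_const_mul, integral_univ_inv_one_add_sq]
  field_simp
  rw [smul_eq_mul, ← mul_assoc, ← pow_two]; field_simp

lemma integrable_inv_sq_add_sq (b : ℝ) (hb : 0 < b) :
    Integrable (fun y : ℝ => (b^2 + y^2)⁻¹) := by
  have h := integrable_inv_one_add_sq.comp_mul_left' (inv_ne_zero hb.ne')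
  have e1 : ∀ x : ℝ, (1 + (b⁻¹ * x)^2)⁻¹ = b^2 * (b^2 + x^2)⁻¹ := by
    intro x; field_simp
  simp only [e1] at h
  have := h.const_mul (b^2)⁻¹
  simpa [mul_assoc, inv_mul_cancel₀ (pow_ne_zero 2 hb.ne'), ← mul_assoc] using this

theorem cauchy_chi_square_integral (a b : ℝ) (ha : 0 < a) (hb : 0 < b) :
    ∫ y : ℝ, (b / (π * (b^2 + y^2)))^2 / (a / (π * (a^2 + y^2)))
      = (a^2 + b^2) / (2 * a * b) := by
  have hπ : (π : ℝ) ≠ 0 := pi_ne_zero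
  have ha' : a ≠ 0 := ha.ne'
  have hb' : b ≠ 0 := hb.ne'
  have hpos : ∀ y : ℝ, 0 < b^2 + y^2 := fun y =>
    add_pos_of_pos_of_nonneg (pow_pos hb 2) (sq_nonneg y)
  set c₁ : ℝ := (a^2 + b^2) / (2 * π * a) with hc₁
  set c₂ : ℝ := (a^2 - b^2) / (2 * π * a) with hc₂
  -- derivative part
  have hderiv : ∀ y : ℝ, HasDerivAt (fun y : ℝ => y / (b^2 + y^2))
      ((b^2 - y^2) / (b^2 + y^2)^2) y := by
    intro y
    have h1 : HasDerivAt (fun y : ℝ => y) 1 y := hasDerivAt_id y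
    have h2 : HasDerivAt (fun y : ℝ => b^2 + y^2) (2*y) y := by
      simpa using ((hasDerivAt_pow 2 y).const_add (b^2))
    have : HasDerivAt (fun y : ℝ => y / (b^2 + y^2))
        ((1 * (b^2 + y^2) - y * (2*y)) / (b^2 + y^2)^2) y := h1.div h2 (hpos y).ne'
    convert this using 1
    ring
  have hint : Integrable (fun y : ℝ => (b^2 - y^2) / (b^2 + y^2)^2) := by
    apply (integrable_inv_sq_add_sq b hb).mono
    · apply Continuous.aestronglyMeasurable
      exact (continuous_const.sub (continuous_pow 2)).div
        ((continuous_const.add (continuous_pow 2)).pow 2) (fun y => pow_ne_zero 2 (hpos y).ne')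
    · filter_upwards with y
      rw [Real.norm_eq_abs, Real.norm_eq_abs, abs_div, abs_of_pos (pow_pos (hpos y) 2),
        abs_of_pos (inv_pos.2 (hpos y)), div_le_iff₀ (pow_pos (hpos y) 2)]
      have habs : |b^2 - y^2| ≤ b^2 + y^2 := by
        rw [abs_le]; constructor <;> nlinarith [sq_nonneg y, sq_nonneg b]
      calc |b^2 - y^2| ≤ b^2 + y^2 := habs
        _ = (b^2 + y^2)⁻¹ * (b^2 + y^2)^2 := by field_simp
  have key : ∀ l : Filter ℝ, Filter.Tendsto abs l Filter.atTop →
      Filter.Tendsto (fun y : ℝ => y / (b^2 + y^2)) l (nhds 0) := by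
    intro l hl
    apply squeeze_zero_norm' (a := fun y : ℝ => |y|⁻¹)
    · filter_upwards [hl.eventually_ge_atTop 1] with y hy
      have h1 : (0:ℝ) < |y| := lt_of_lt_of_le one_pos hy
      rw [Real.norm_eq_abs, abs_div, abs_of_pos (hpos y)]
      calc |y| / (b^2 + y^2) ≤ |y| / |y|^2 :=
            div_le_div_of_nonneg_left (abs_nonneg y) (pow_pos h1 2)
              (by nlinarith [sq_abs y, sq_nonneg b])
        _ = |y|⁻¹ := by rw [pow_two, ← div_div, div_self h1.ne', one_div]
    · exact tendsto_inv_atTop_zero.comp hl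
  have htop := key Filter.atTop Filter.tendsto_abs_atTop_atTop
  have hbot := key Filter.atBot Filter.tendsto_abs_atBot_atTop
  have hzero : ∫ y : ℝ, (b^2 - y^2) / (b^2 + y^2)^2 = 0 := by
    simpa using integral_of_hasDerivAt_of_tendsto hderiv hint hbot htop
  -- decomposition
  have hdecomp : ∀ y : ℝ, (b / (π * (b^2 + y^2)))^2 / (a / (π * (a^2 + y^2)))
      = c₁ * (b^2 + y^2)⁻¹ + c₂ * ((b^2 - y^2) / (b^2 + y^2)^2) := by
    intro y
    have h2 : (0:ℝ) < a^2 + y^2 := add_pos_of_pos_of_nonneg (pow_pos ha 2) (sq_nonneg y)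
    rw [hc₁, hc₂]
    field_simp
    ring
  calc ∫ y : ℝ, (b / (π * (b^2 + y^2)))^2 / (a / (π * (a^2 + y^2)))
      = ∫ y : ℝ, (c₁ * (b^2 + y^2)⁻¹ + c₂ * ((b^2 - y^2) / (b^2 + y^2)^2)) := by
        exact integral_congr_ae (Filter.Eventually.of_forall hdecomp)
    _ = c₁ * (π / b) + c₂ * 0 := by
        rw [integral_add ((integrable_inv_sq_add_sq b hb).const_mul c₁) (hint.const_mul c₂),
          integral_const_mul, integral_const_mul, integral_inv_sq_add_sq' b hb, hzero]
    _ = (a^2 + b^2) / (2 * a * b) := by rw [hc₁]; field_simp; ring
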